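/- Suppose the merging operator ⊕ satisfies conditions (C1)-(C3) with respect to a recursive formulation of a maximization problem. Then for any relaxed state S̃ that relaxes a reachable state S at stage i, the optimal value function satisfies V_i(S) ≤ Ṽ_i(S̃), where Ṽ is the value function of the relaxed recursion; in particular the relaxed recursion's root value is an upper bound on the optimal value. -/
import Mathlib


/-- If the relaxation relation (induced by a merging operator satisfying (C1)-(C3))
holds between a relaxed state `St` and a state `S` at stage `i`, then the value
function of the (common) Bellman recursion satisfies `V i S ≤ V i St`; in particular
the relaxed recursion's root value is an upper bound on the optimal value. -/
theorem stmt6 {σ : Type} (n : ℕ)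
    (Xact : ℕ → σ → Set ℤ) (φ : ℕ → σ → ℤ → σ) (g : ℕ → σ → ℤ → ℝ)
    (V : ℕ → σ → ℝ)
    (Rel : ℕ → σ → σ → Prop)
    (hRel : ∀ i St S, Rel i St S ↔
      (Xact i S ⊆ Xact i St ∧ ∀ x ∈ Xact i S, g i S x ≤ g i St x))
    (hC3 : ∀ i St S, Rel i St S → ∀ x ∈ Xact i S, Rel (i+1) (φ i St x) (φ i S x))
    (hBell : ∀ i, i < n → ∀ S : σ,
      IsGreatest {r | ∃ x ∈ Xact i S, r = g i S x + V (i+1) (φ i S x)} (V i S))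
    (hEnd : ∀ S, V n S = 0) :
    ∀ i ≤ n, ∀ S St : σ, Rel i St S → V i S ≤ V i St := by
  suffices h : ∀ k i, n - i = k → i ≤ n → ∀ S St : σ, Rel i St S → V i S ≤ V i St by
    intro i hi; exact h (n - i) i rfl hi
  intro k
  induction k with
  | zero =>
    intro i hk hi S St _
    have : i = n := le_antisymm hi (by omega)
    subst this
    rw [hEnd, hEnd]
  | succ k ih =>
    intro i hk hi S St hrel
    have hlt : i < n := by omega
    obtain ⟨hsub, hg⟩ := (hRel i St S).mp hrel
    obtain ⟨⟨x, hx, hxeq⟩, hub⟩ := hBell i hlt S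
    obtain ⟨_, hubt⟩ := hBell i hlt St
    have hrec : V (i+1) (φ i S x) ≤ V (i+1) (φ i St x) :=
      ih (i+1) (by omega) (by omega) _ _ (hC3 i St S hrel x hx)
    calc V i S = g i S x + V (i+1) (φ i S x) := hxeq
      _ ≤ g i St x + V (i+1) (φ i St x) := add_le_add (hg x hx) hrec
      _ ≤ V i St := hubt ⟨x, hsub hx, rfl⟩
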